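/- Let d = gcd(m, ℓ). If there exist n distinct m-th roots of unity x_1,…,x_n with x_1^ℓ + ⋯ + x_n^ℓ = 0, then there exist non-negative integers a_1,…,a_{m/d}, each at most d, summing to n, such that Σ a_i z_i = 0 where z_1,…,z_{m/d} are the (m/d)-th roots of unity. -/

import Mathlib

theorem height_forward (m ℓ n : ℕ) (hm : 0 < m) (hℓ : 0 < ℓ) (hn2 : 2 ≤ n)
    (hnm : n ≤ m) (d : ℕ) (hd : d = Nat.gcd m ℓ)
    (x : Fin n → ℂ) (hinj : Function.Injective x) (hx : ∀ i, x i ^ m = 1)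
    (hsum : ∑ i, (x i) ^ ℓ = 0) :
    ∃ a : ℂ → ℕ, (∀ z, a z ≤ d) ∧
      (∑ z ∈ Polynomial.nthRootsFinset (m / d) (1 : ℂ), a z) = n ∧
      ∑ z ∈ Polynomial.nthRootsFinset (m / d) (1 : ℂ), (a z : ℂ) * z = 0 := by
  have hd0 : 0 < d := hd ▸ Nat.gcd_pos_of_pos_left ℓ hm
  have hdm : d ∣ m := hd ▸ Nat.gcd_dvd_left m ℓ
  have hdl : d ∣ ℓ := hd ▸ Nat.gcd_dvd_right m ℓ
  have hmd0 : 0 < m / d := Nat.div_pos (Nat.le_of_dvd hm hdm) hd0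
  -- each x i ^ ℓ is an (m/d)-th root of unity
  have hmem : ∀ i, x i ^ ℓ ∈ Polynomial.nthRootsFinset (m / d) (1 : ℂ) := by
    intro i
    rw [Polynomial.mem_nthRootsFinset hmd0, ← pow_mul]
    have : ℓ * (m / d) = m * (ℓ / d) := by
      obtain ⟨k, hk⟩ := hdm
      obtain ⟨j, hj⟩ := hdl
      subst hk hj
      rw [Nat.mul_div_cancel_left _ hd0, Nat.mul_div_cancel_left _ hd0]
      ring
    rw [this, pow_mul, hx i, one_pow]
  refine ⟨fun z => (Finset.univ.filter (fun i => x i ^ ℓ = z)).card, ?_, ?_, ?_⟩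
  · intro z
    by_cases hne : (Finset.univ.filter (fun i => x i ^ ℓ = z)).Nonempty
    · obtain ⟨i0, hi0⟩ := hne
      rw [Finset.mem_filter] at hi0
      have hx0 : x i0 ≠ 0 := fun h => by simpa [h, zero_pow hm.ne'] using hx i0
      calc (Finset.univ.filter (fun i => x i ^ ℓ = z)).card
          ≤ (Polynomial.nthRootsFinset d (1 : ℂ)).card := by
            apply Finset.card_le_card_of_injOn (fun j => x j / x i0)
            · intro j hj
              rw [Finset.mem_coe, Finset.mem_filter] at hj
              rw [Finset.mem_coe, Polynomial.mem_nthRootsFinset hd0, hd]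
              refine pow_gcd_eq_one.mpr ⟨?_, ?_⟩
              · rw [div_pow, hx j, hx i0, div_one]
              · rw [div_pow, hj.2, hi0.2, div_self]
                exact fun h => pow_ne_zero ℓ hx0 (hi0.2.trans h)
            · intro j1 _ j2 _ h
              exact hinj (by field_simp at h; exact h)
      _ = d := (Complex.isPrimitiveRoot_exp d hd0.ne').card_nthRootsFinset
    · rw [Finset.not_nonempty_iff_eq_empty] at hne
      simp [hne]
  · rw [← Finset.card_eq_sum_card_fiberwise (fun i (_ : i ∈ Finset.univ) => hmem i)]
    simp
  · have := Finset.sum_fiberwise_of_maps_to (g := fun i => x i ^ ℓ)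
      (fun i (_ : i ∈ Finset.univ) => hmem i) (fun i => x i ^ ℓ)
    rw [← hsum, ← this]
    apply Finset.sum_congr rfl
    intro z _
    rw [Finset.sum_congr rfl (fun i hi => (Finset.mem_filter.mp hi).2),
      Finset.sum_const, nsmul_eq_mul]
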